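/- Let T be a finite tree and let S be a nonempty set of vertices of T. Then the number of connected components of T − S (the subgraph of T induced on the vertices not in S) that are adjacent in T to at least two distinct vertices of S is at most |S| − 1. -/

import Mathlib

set_option linter.unusedSectionVars false

open SimpleGraph Walk

section Aux

variable {V : Type*} [DecidableEq V] {G : SimpleGraph V}

private lemma aux_path_concat {u v w : V} {p : G.Walk u v} (hp : p.IsPath) (h : G.Adj v w)
    (hw : w ∉ p.support) : (p.concat h).IsPath := by
  rw [← Walk.isPath_reverse_iff, Walk.reverse_concat]
  exact hp.reverse.cons (by simpa [Walk.support_reverse] using hw)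

/-- In a tree, any path realizes the distance. -/
private lemma aux_path_length (hG : G.IsTree) {u v : V} {p : G.Walk u v} (hp : p.IsPath) :
    p.length = G.dist u v := by
  obtain ⟨q, hq, hql⟩ := hG.isConnected.exists_path_of_dist u v
  rw [(hG.existsUnique_path u v).unique hp hq, hql]

private lemma aux_dist_le_of_mem {u v x : V} (p : G.Walk u v) (hx : x ∈ p.support) :
    G.dist u x ≤ p.length :=
  le_trans (SimpleGraph.dist_le (p.takeUntil x hx)) (Walk.length_takeUntil_le p hx)

/-- On a geodesic, a vertex at distance equal to the length is the endpoint. -/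
private lemma aux_eq_end {u v x : V} (p : G.Walk u v) (hx : x ∈ p.support)
    (hlen : p.length = G.dist u v) (hd : G.dist u x = G.dist u v) : x = v := by
  classical
  have h1 : G.dist u x ≤ (p.takeUntil x hx).length := SimpleGraph.dist_le _
  have h2 : (p.takeUntil x hx).length + (p.dropUntil x hx).length = p.length := by
    rw [← Walk.length_append, Walk.take_spec]
  have h0 : (p.dropUntil x hx).length = 0 := by omega
  exact Walk.eq_of_length_eq_zero h0

private lemma aux_dist_adj (hG : G.IsTree) {r v s : V} (h : G.Adj v s)
    (hle : G.dist r s ≤ G.dist r v) : G.dist r v = G.dist r s + 1 := by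
  obtain ⟨p, hp, hpl⟩ := hG.isConnected.exists_path_of_dist r s
  have hv : v ∉ p.support := by
    intro hv
    have h1 : G.dist r v ≤ p.length := aux_dist_le_of_mem p hv
    have h2 : G.dist r v = G.dist r s := le_antisymm (by omega) hle
    exact h.ne (aux_eq_end p hv hpl h2)
  have hq : (p.concat h.symm).IsPath := aux_path_concat hp h.symm hv
  have := aux_path_length hG hq
  rw [Walk.length_concat, hpl] at this
  omega

/-- Disjunction form: adjacent vertices have distances differing by exactly one in a tree. -/
private lemma aux_dist_adj' (hG : G.IsTree) {r v s : V} (h : G.Adj v s) :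
    G.dist r v = G.dist r s + 1 ∨ G.dist r s = G.dist r v + 1 := by
  rcases le_total (G.dist r s) (G.dist r v) with hle | hle
  · exact Or.inl (aux_dist_adj hG h hle)
  · exact Or.inr (aux_dist_adj hG h.symm hle)

/-- The vertex just above `s` in a tree rooted at `r` is unique. -/
private lemma aux_parent_unique (hG : G.IsTree) {r v v' s : V}
    (h : G.Adj v s) (h' : G.Adj v' s)
    (hd : G.dist r s = G.dist r v + 1) (hd' : G.dist r s = G.dist r v' + 1) : v = v' := by
  obtain ⟨p, hp, hpl⟩ := hG.isConnected.exists_path_of_dist r v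
  obtain ⟨p', hp', hpl'⟩ := hG.isConnected.exists_path_of_dist r v'
  have hs : s ∉ p.support := fun hs =>
    absurd (aux_dist_le_of_mem p hs) (by omega)
  have hs' : s ∉ p'.support := fun hs' =>
    absurd (aux_dist_le_of_mem p' hs') (by omega)
  have hq : (p.concat h).IsPath := aux_path_concat hp h hs
  have hq' : (p'.concat h').IsPath := aux_path_concat hp' h' hs'
  have heq : p.concat h = p'.concat h' := (hG.existsUnique_path r s).unique hq hq'
  exact (Walk.concat_inj heq).1

/-- Key crossing lemma: if two vertices of the same component of the complement of a set
have "upward" attachments `s₁`, `s₂`, then `s₂ = s₁` or `s₂` is strictly closer to the root. -/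
private lemma aux_crossing (hG : G.IsTree) {s0 : Set V} {r s₁ s₂ : V}
    {v₁ v₂ : s0} (h1 : G.Adj ↑v₁ s₁) (h2 : G.Adj ↑v₂ s₂)
    (hd1 : G.dist r ↑v₁ = G.dist r s₁ + 1) (hd2 : G.dist r ↑v₂ = G.dist r s₂ + 1)
    (hs2 : s₂ ∉ s0) (hre : (G.induce s0).Reachable v₁ v₂) :
    s₂ = s₁ ∨ G.dist r s₂ < G.dist r s₁ := by
  obtain ⟨q₁, hq₁, hq₁l⟩ := hG.isConnected.exists_path_of_dist r s₁
  obtain ⟨q₂, hq₂, hq₂l⟩ := hG.isConnected.exists_path_of_dist r s₂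
  have hv₁ : (v₁ : V) ∉ q₁.support := fun hv =>
    absurd (aux_dist_le_of_mem q₁ hv) (by omega)
  have hv₂ : (v₂ : V) ∉ q₂.support := fun hv =>
    absurd (aux_dist_le_of_mem q₂ hv) (by omega)
  have hp₁ : (q₁.concat h1.symm).IsPath := aux_path_concat hq₁ h1.symm hv₁
  have hp₂ : (q₂.concat h2.symm).IsPath := aux_path_concat hq₂ h2.symm hv₂
  obtain ⟨w⟩ := hre
  set wG : G.Walk (↑v₁) (↑v₂) := w.map (SimpleGraph.Embedding.induce s0).toHom with hwG
  set W : G.Walk r ↑v₂ := (q₁.concat h1.symm).append wG with hW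
  have hB : W.bypass = q₂.concat h2.symm :=
    (hG.existsUnique_path r ↑v₂).unique W.bypass_isPath hp₂
  have hs₂mem : s₂ ∈ W.support := by
    apply Walk.support_bypass_subset
    rw [hB, Walk.support_concat]
    simp [List.concat_eq_append]
  rw [hW, Walk.mem_support_append_iff] at hs₂mem
  have hs₂q₁ : s₂ ∈ q₁.support := by
    rcases hs₂mem with hmem | hmem
    · rw [Walk.support_concat, List.mem_append] at hmem
      rcases hmem with hmem | hmem
      · exact hmem
      · exact absurd (List.mem_singleton.mp hmem ▸ v₁.2) hs2
    · exfalso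
      obtain ⟨x, _, hx⟩ := List.mem_map.mp (by rw [← Walk.support_map]; exact hmem)
      exact hs2 (hx ▸ x.2)
  have hle : G.dist r s₂ ≤ G.dist r s₁ := by
    have := aux_dist_le_of_mem q₁ hs₂q₁
    omega
  rcases eq_or_lt_of_le hle with heq | hlt
  · exact Or.inl (aux_eq_end q₁ hs₂q₁ hq₁l heq)
  · exact Or.inr hlt

end Aux

/-- In a finite tree `T`, for any nonempty set `S` of vertices, the number of connected
components of `T - S` adjacent (in `T`) to at least two distinct vertices of `S` is at
most `|S| - 1`. -/
theorem components_adjacent_to_two_le {V : Type*} [Fintype V] [DecidableEq V]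
    (G : SimpleGraph V) (hG : G.IsTree) (S : Finset V) (hS : S.Nonempty) :
    {C : (G.induce {v : V | v ∉ S}).ConnectedComponent |
        ∃ s₁ ∈ S, ∃ s₂ ∈ S, s₁ ≠ s₂ ∧
          (∃ v : {v : V | v ∉ S},
            (G.induce {v : V | v ∉ S}).connectedComponentMk v = C ∧ G.Adj ↑v s₁) ∧
          (∃ w : {v : V | v ∉ S},
            (G.induce {v : V | v ∉ S}).connectedComponentMk w = C ∧ G.Adj ↑w s₂)}.ncard
      ≤ S.card - 1 := by
  classical
  obtain ⟨r, hr⟩ := hS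
  set s0 : Set V := {v : V | v ∉ S} with hs0
  set bad : Set ((G.induce s0).ConnectedComponent) :=
    {C | ∃ s₁ ∈ S, ∃ s₂ ∈ S, s₁ ≠ s₂ ∧
          (∃ v : s0, (G.induce s0).connectedComponentMk v = C ∧ G.Adj ↑v s₁) ∧
          (∃ w : s0, (G.induce s0).connectedComponentMk w = C ∧ G.Adj ↑w s₂)} with hbad
  -- selection predicate: a "downward" attachment of the component `C`
  set Q : (G.induce s0).ConnectedComponent → V → Prop :=
    fun C s => s ∈ S ∧ ∃ v : s0, (G.induce s0).connectedComponentMk v = C ∧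
      G.Adj ↑v s ∧ G.dist r s = G.dist r ↑v + 1 with hQ
  -- existence of a downward attachment for each bad component
  have key : ∀ C ∈ bad, ∃ s, Q C s := by
    rintro C ⟨s₁, hs₁, s₂, hs₂, hne, ⟨v₁, hv₁C, hv₁adj⟩, ⟨v₂, hv₂C, hv₂adj⟩⟩
    by_contra hcon
    push_neg at hcon
    have hdown : ∀ (s : V), s ∈ S → ∀ v : s0, (G.induce s0).connectedComponentMk v = C →
        G.Adj ↑v s → G.dist r ↑v = G.dist r s + 1 := by
      intro s hsS v hvC hadj
      rcases aux_dist_adj' hG (r := r) hadj with h | h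
      · exact h
      · exact absurd ⟨hsS, v, hvC, hadj, h⟩ (hcon s)
    have hd1 := hdown s₁ hs₁ v₁ hv₁C hv₁adj
    have hd2 := hdown s₂ hs₂ v₂ hv₂C hv₂adj
    have hre : (G.induce s0).Reachable v₁ v₂ :=
      SimpleGraph.ConnectedComponent.exact (hv₁C.trans hv₂C.symm)
    have hs₂0 : s₂ ∉ s0 := fun h => h hs₂
    have hs₁0 : s₁ ∉ s0 := fun h => h hs₁
    rcases aux_crossing hG hv₁adj hv₂adj hd1 hd2 hs₂0 hre with h | h
    · exact hne h.symm
    · rcases aux_crossing hG hv₂adj hv₁adj hd2 hd1 hs₁0 hre.symm with h' | h'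
      · exact hne h'
      · omega
  -- the injection into `S.erase r`
  set f : (G.induce s0).ConnectedComponent → V :=
    fun C => if h : ∃ s, Q C s then h.choose else r with hf
  have hmem : ∀ C ∈ bad, f C ∈ (↑(S.erase r) : Set V) := by
    intro C hC
    have h := key C hC
    simp only [hf, dif_pos h]
    obtain ⟨hsS, v, _, _, hdist⟩ := h.choose_spec
    have hner : h.choose ≠ r := by
      intro he
      rw [he, SimpleGraph.dist_self] at hdist
      omega
    simpa [and_comm] using Finset.mem_erase.mpr ⟨hner, hsS⟩
  have hinj : Set.InjOn f bad := by
    intro C hC C' hC' hEq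
    have h := key C hC
    have h' := key C' hC'
    simp only [hf, dif_pos h, dif_pos h'] at hEq
    obtain ⟨_, v, hvC, hvadj, hvd⟩ := h.choose_spec
    obtain ⟨_, v', hv'C, hv'adj, hv'd⟩ := h'.choose_spec
    rw [hEq] at hvadj hvd
    have hvv : (v : V) = ↑v' := aux_parent_unique hG hvadj hv'adj hvd hv'd
    rw [← hvC, ← hv'C, Subtype.ext hvv]
  have hfin : (↑(S.erase r) : Set V).Finite := (S.erase r).finite_toSet
  have hle := Set.ncard_le_ncard_of_injOn f hmem hinj hfin
  rwa [Set.ncard_coe_finset, Finset.card_erase_of_mem hr] at hle
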